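/- Let N ≥ 2 and for q > N set C(q) = ω_{N−1}^{1−N/q} (Γ(q/(q−N)) Γ(N(q−1)/(q−N)) / Γ(Nq/(q−N)))^{1−N/q} (q(N−1)/N)^{N/q}. Then lim_{q → N⁺} C(q) = ((N−1)/N)^N. -/

import Mathlib

open Real Filter

open Real Filter Set

lemma stirlingSeq_le_two {n : ℕ} (hn : 1 ≤ n) : Stirling.stirlingSeq n ≤ 2 := by
  obtain ⟨m, rfl⟩ := Nat.exists_eq_add_of_le hn
  have h := Stirling.stirlingSeq'_antitone (Nat.zero_le m)
  simp only [Function.comp] at h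
  calc Stirling.stirlingSeq (1 + m) = Stirling.stirlingSeq (m + 1) := by ring_nf
    _ ≤ Stirling.stirlingSeq (0 + 1) := h
    _ = exp 1 / Real.sqrt 2 := by norm_num [Stirling.stirlingSeq_one]
    _ ≤ 2 := by
        rw [div_le_iff₀ (by positivity)]
        have h2 : (1.41 : ℝ) ≤ Real.sqrt 2 := by
          rw [show (1.41 : ℝ) = Real.sqrt (1.41 ^ 2) by
            rw [Real.sqrt_sq (by norm_num)]]
          exact Real.sqrt_le_sqrt (by norm_num)
        nlinarith [Real.exp_one_lt_d9]

lemma one_le_stirlingSeq {n : ℕ} (hn : 1 ≤ n) : 1 ≤ Stirling.stirlingSeq n := by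
  obtain ⟨m, rfl⟩ := Nat.exists_eq_add_of_le hn
  have ht : Tendsto (Stirling.stirlingSeq ∘ Nat.succ) atTop (nhds (Real.sqrt π)) :=
    Stirling.tendsto_stirlingSeq_sqrt_pi.comp (tendsto_add_atTop_nat 1)
  have h := Stirling.stirlingSeq'_antitone.le_of_tendsto ht m
  have hπ : (1 : ℝ) ≤ Real.sqrt π := by
    rw [show (1:ℝ) = Real.sqrt 1 by simp]
    exact Real.sqrt_le_sqrt (by linarith [Real.pi_gt_three])
  calc (1:ℝ) ≤ Real.sqrt π := hπ
    _ ≤ Stirling.stirlingSeq (Nat.succ m) := h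
    _ = Stirling.stirlingSeq (1 + m) := by rw [Nat.succ_eq_add_one, Nat.add_comm]

lemma log_factorial_bounds {n : ℕ} (hn : 1 ≤ n) :
    (n : ℝ) * Real.log n - n ≤ Real.log (Nat.factorial n) ∧
    Real.log (Nat.factorial n) ≤ (n : ℝ) * Real.log n - n + (1/2) * Real.log (2*n) + 1 := by
  have hn0 : (0:ℝ) < n := by exact_mod_cast hn
  have hfact : (Nat.factorial n : ℝ) = Stirling.stirlingSeq n * (Real.sqrt (2*n) * ((n:ℝ)/exp 1)^n) := by
    rw [Stirling.stirlingSeq, div_mul_cancel₀]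
    positivity
  have hc1 := one_le_stirlingSeq hn
  have hc2 := stirlingSeq_le_two hn
  have hlog : Real.log (Nat.factorial n) = Real.log (Stirling.stirlingSeq n)
      + ((1/2) * Real.log (2*n) + ((n:ℝ) * Real.log n - n)) := by
    rw [hfact, Real.log_mul (by positivity) (by positivity),
      Real.log_mul (by positivity) (by positivity), Real.log_sqrt (by positivity),
      Real.log_pow, Real.log_div (by positivity) (exp_ne_zero 1), Real.log_exp]
    ring
  have h1 : (0:ℝ) ≤ Real.log (Stirling.stirlingSeq n) := Real.log_nonneg hc1
  have h2 : Real.log (Stirling.stirlingSeq n) ≤ 1 := by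
    calc Real.log (Stirling.stirlingSeq n) ≤ Real.log 2 := Real.log_le_log (by linarith) hc2
      _ ≤ 1 := by linarith [Real.log_two_lt_d9]
  have h3 : (0:ℝ) ≤ Real.log (2*n) := Real.log_nonneg (by exact_mod_cast by linarith : (1:ℝ) ≤ 2*n)
  constructor <;> [nlinarith; nlinarith]

lemma mul_log_sub_monotoneOn : MonotoneOn (fun t : ℝ => t * Real.log t - t) (Ici 1) := by
  have hderiv : ∀ x ∈ interior (Ici (1:ℝ)), HasDerivAt (fun t : ℝ => t * Real.log t - t) (Real.log x) x := by
    intro x hx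
    rw [interior_Ici, mem_Ioi] at hx
    have h := (Real.hasDerivAt_mul_log (by linarith : x ≠ 0)).sub (hasDerivAt_id x)
    simp only [add_sub_cancel_right] at h
    exact h
  apply monotoneOn_of_deriv_nonneg (convex_Ici 1)
  · apply ContinuousOn.sub (ContinuousOn.mul continuousOn_id ?_) continuousOn_id
    exact Real.continuousOn_log.mono (fun x hx => by simp only [mem_compl_iff, mem_singleton_iff]; intro h; rw [h] at hx; simp at hx; linarith)
  · intro x hx
    exact (hderiv x hx).differentiableAt.differentiableWithinAt
  · intro x hx
    rw [(hderiv x hx).deriv]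
    rw [interior_Ici, mem_Ioi] at hx
    exact Real.log_nonneg hx.le

lemma log_Gamma_bound {x : ℝ} (hx : 3 ≤ x) :
    |Real.log (Real.Gamma x) - (x * Real.log x - x)| ≤ 2 * Real.log (2*x) + 1 := by
  set n : ℕ := ⌊x⌋₊ with hn
  have hx0 : (0:ℝ) < x := by linarith
  have hn3 : 3 ≤ n := Nat.le_floor (by exact_mod_cast hx)
  have hnx : (n : ℝ) ≤ x := Nat.floor_le hx0.le
  have hxn : x < n + 1 := Nat.lt_floor_add_one x
  have hm3 : (3:ℝ) ≤ n := by exact_mod_cast hn3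
  -- Gamma sandwiched between factorials
  have hmono := Real.Gamma_strictMonoOn_Ici.monotoneOn
  have hG1 : Real.Gamma n ≤ Real.Gamma x :=
    hmono (by simp only [mem_Ici]; linarith) (by simp only [mem_Ici]; linarith) hnx
  have hG2 : Real.Gamma x ≤ Real.Gamma (n + 1) :=
    hmono (by simp only [mem_Ici]; linarith) (by simp only [mem_Ici]; linarith) hxn.le
  have hfa : Real.Gamma ((n:ℝ)) = Nat.factorial (n-1) := by
    have : ((n - 1 : ℕ) : ℝ) + 1 = (n : ℝ) := by
      have : 1 ≤ n := by omega
      push_cast [Nat.cast_sub this]; ring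
    rw [← this, Real.Gamma_nat_eq_factorial]
  have hfb : Real.Gamma ((n:ℝ) + 1) = Nat.factorial n := Real.Gamma_nat_eq_factorial n
  have hGpos : 0 < Real.Gamma x := Real.Gamma_pos_of_pos hx0
  -- factorial bounds
  obtain ⟨hfl, _⟩ := log_factorial_bounds (n := n - 1) (by omega)
  obtain ⟨_, hfu⟩ := log_factorial_bounds (n := n) (by omega)
  have hcast : ((n - 1 : ℕ) : ℝ) = (n : ℝ) - 1 := by
    push_cast [Nat.cast_sub (by omega : 1 ≤ n)]; ring
  rw [hcast] at hfl
  -- monotonicity of t log t - t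
  have hmono2 := mul_log_sub_monotoneOn
  have hf1 : (n:ℝ) * Real.log n - n ≤ x * Real.log x - x :=
    hmono2 (by simp only [mem_Ici]; linarith) (by simp only [mem_Ici]; linarith) hnx
  have hf2 : x * Real.log x - x ≤ ((n:ℝ)+1) * Real.log ((n:ℝ)+1) - ((n:ℝ)+1) :=
    hmono2 (by simp only [mem_Ici]; linarith) (by simp only [mem_Ici]; linarith) hxn.le
  -- upper bound
  have hupper : Real.log (Real.Gamma x) - (x * Real.log x - x) ≤ 2 * Real.log (2*x) + 1 := by
    have h1 : Real.log (Real.Gamma x) ≤ Real.log (Nat.factorial n) := by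
      apply Real.log_le_log hGpos; rw [← hfb]; exact hG2
    have h2 : Real.log (2*(n:ℝ)) ≤ Real.log (2*x) := Real.log_le_log (by linarith) (by linarith)
    have h3 : (0:ℝ) ≤ Real.log (2*x) := Real.log_nonneg (by linarith)
    linarith
  -- lower bound
  have hlower : -(2 * Real.log (2*x) + 1) ≤ Real.log (Real.Gamma x) - (x * Real.log x - x) := by
    have h1 : Real.log (Nat.factorial (n-1)) ≤ Real.log (Real.Gamma x) := by
      apply Real.log_le_log (by positivity); rw [← hfa]; exact hG1
    -- (n+1) log(n+1) - (n-1) log(n-1) ≤ 2 log(n+1) + 2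
    have hkey : ((n:ℝ)+1) * Real.log ((n:ℝ)+1) - ((n:ℝ)-1) * Real.log ((n:ℝ)-1)
        ≤ 2 * Real.log ((n:ℝ)+1) + 2 := by
      have hne : ((n:ℝ)-1) ≠ 0 := by linarith
      have hd : Real.log ((n:ℝ)+1) - Real.log ((n:ℝ)-1) ≤ 2 / ((n:ℝ)-1) := by
        rw [← Real.log_div (by linarith) (by linarith)]
        have h5 := Real.log_le_sub_one_of_pos
          (show (0:ℝ) < ((n:ℝ)+1)/((n:ℝ)-1) from div_pos (by linarith) (by linarith))
        have h6 : ((n:ℝ)+1)/((n:ℝ)-1) - 1 = 2 / ((n:ℝ)-1) := by field_simp; ring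
        linarith
      have := mul_le_mul_of_nonneg_left hd (by linarith : (0:ℝ) ≤ (n:ℝ)-1)
      rw [mul_div_cancel₀ _ hne] at this
      nlinarith
    have h4 : Real.log ((n:ℝ)+1) ≤ Real.log (2*x) := Real.log_le_log (by linarith) (by linarith)
    have h3 : (0:ℝ) ≤ Real.log (2*x) := Real.log_nonneg (by linarith)
    linarith
  rw [abs_le]; exact ⟨hlower, hupper⟩

/-- Surface area `ω_{N−1}` of the unit sphere `S^{N−1} ⊂ ℝ^N`. -/
noncomputable def sphereArea (N : ℕ) : ℝ :=
  2 * Real.pi ^ ((N : ℝ) / 2) / Real.Gamma ((N : ℝ) / 2)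

/-- The Bliss constant
`C(q) = ω_{N−1}^{1−N/q} (Γ(q/(q−N))Γ(N(q−1)/(q−N))/Γ(Nq/(q−N)))^{1−N/q} (q(N−1)/N)^{N/q}`. -/
noncomputable def blissC (N : ℕ) (q : ℝ) : ℝ :=
  sphereArea N ^ (1 - (N : ℝ) / q) *
    (Real.Gamma (q / (q - N)) * Real.Gamma ((N : ℝ) * (q - 1) / (q - N)) /
      Real.Gamma ((N : ℝ) * q / (q - N))) ^ (1 - (N : ℝ) / q) *
    (q * ((N : ℝ) - 1) / N) ^ ((N : ℝ) / q)

set_option maxHeartbeats 2000000 in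
/-- `lim_{q → N⁺} C(q) = ((N−1)/N)^N`. -/
theorem stmt18 {N : ℕ} (hN : 2 ≤ N) :
    Tendsto (fun q => blissC N q) (nhdsWithin (N : ℝ) (Set.Ioi (N : ℝ)))
      (nhds ((((N : ℝ) - 1) / N) ^ N)) := by
  set c : ℝ := (N : ℝ) with hcdef
  have hc2 : (2:ℝ) ≤ c := by rw [hcdef]; exact_mod_cast hN
  have hc0 : (0:ℝ) < c := by linarith
  have hc1 : (0:ℝ) < c - 1 := by linarith
  set l := nhdsWithin c (Set.Ioi c) with hldef
  -- basic limits
  have htq : Tendsto (fun q : ℝ => q) l (nhds c) := Filter.tendsto_id.mono_left nhdsWithin_le_nhds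
  have hu : Tendsto (fun q : ℝ => q - c) l (nhdsWithin 0 (Set.Ioi 0)) := by
    rw [tendsto_nhdsWithin_iff]
    constructor
    · have := (htq.sub (tendsto_const_nhds (x := c)))
      simpa using this
    · exact eventually_mem_nhdsWithin.mono fun q hq => by simp [Set.mem_Ioi] at hq ⊢; linarith
  have hulogu : Tendsto (fun q : ℝ => (q - c) * Real.log (q - c)) l (nhds 0) := by
    have h := (tendsto_log_mul_rpow_nhdsGT_zero one_pos).comp hu
    refine h.congr fun q => ?_
    simp [Function.comp, Real.rpow_one, mul_comm]
  have hq0ev : ∀ᶠ q in l, c < q := eventually_mem_nhdsWithin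
  have he0 : Tendsto (fun q : ℝ => 1 - c / q) l (nhds 0) := by
    have : Tendsto (fun q : ℝ => 1 - c / q) l (nhds (1 - c / c)) :=
      tendsto_const_nhds.sub (tendsto_const_nhds.div htq hc0.ne')
    simpa [div_self hc0.ne'] using this
  have hinvq : Tendsto (fun q : ℝ => 1 / q) l (nhds (1 / c)) :=
    tendsto_const_nhds.div htq hc0.ne'
  -- positivity of sphere area
  have hA : 0 < sphereArea N := by
    rw [sphereArea]
    apply div_pos (by positivity)
    exact Real.Gamma_pos_of_pos (by positivity)
  -- remainder functions
  set r : ℝ → ℝ := fun t => Real.log (Real.Gamma t) - (t * Real.log t - t) with hrdef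
  -- the explicit decomposition
  set G : ℝ → ℝ := fun q =>
    ((1 - c / q) * Real.log (sphereArea N)
    + (1 - c / q) * (r (q / (q - c)) + r (c * (q - 1) / (q - c)) - r (c * q / (q - c)))
    + (1 - c / q) * (Real.log q - Real.log (q - c))
    + ((c * (q - 1) / q) * Real.log (c * (q - 1) / q) - c * Real.log c
        + (c - 1 - c * (q - 1) / q)))
    + (c / q) * Real.log (q * (c - 1) / c) with hGdef
  -- pointwise identity
  have heq : ∀ᶠ q in l, Real.log (blissC N q) = G q := by
    refine hq0ev.mono fun q hq => ?_
    have hq0 : (0:ℝ) < q := by linarith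
    have hu0 : (0:ℝ) < q - c := by linarith
    have hq1 : (0:ℝ) < q - 1 := by linarith
    have hx : (0:ℝ) < q / (q - c) := div_pos hq0 hu0
    have hy : (0:ℝ) < c * (q - 1) / (q - c) := div_pos (by positivity) hu0
    have hz : (0:ℝ) < c * q / (q - c) := div_pos (by positivity) hu0
    have hGx := Real.Gamma_pos_of_pos hx
    have hGy := Real.Gamma_pos_of_pos hy
    have hGz := Real.Gamma_pos_of_pos hz
    have hP : (0:ℝ) < q * (c - 1) / c := by positivity
    have hR : (0:ℝ) < Real.Gamma (q / (q - c)) * Real.Gamma (c * (q - 1) / (q - c)) /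
        Real.Gamma (c * q / (q - c)) := div_pos (mul_pos hGx hGy) hGz
    have lx : Real.log (q / (q - c)) = Real.log q - Real.log (q - c) :=
      Real.log_div hq0.ne' hu0.ne'
    have ly : Real.log (c * (q - 1) / (q - c))
        = Real.log c + Real.log (q - 1) - Real.log (q - c) := by
      rw [Real.log_div (by positivity) hu0.ne', Real.log_mul hc0.ne' hq1.ne']
    have lz : Real.log (c * q / (q - c)) = Real.log c + Real.log q - Real.log (q - c) := by
      rw [Real.log_div (by positivity) hu0.ne', Real.log_mul hc0.ne' hq0.ne']
    have la : Real.log (c * (q - 1) / q) = Real.log c + Real.log (q - 1) - Real.log q := by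
      rw [Real.log_div (by positivity) hq0.ne', Real.log_mul hc0.ne' hq1.ne']
    have lP : Real.log (q * (c - 1) / c) = Real.log q + Real.log (c - 1) - Real.log c := by
      rw [Real.log_div (by positivity) hc0.ne', Real.log_mul hq0.ne' hc1.ne']
    rw [blissC]
    rw [Real.log_mul (by positivity) (by positivity), Real.log_mul (by positivity) (by positivity)]
    rw [Real.log_rpow hA, Real.log_rpow hR, Real.log_rpow hP]
    rw [Real.log_div (by positivity) hGz.ne', Real.log_mul hGx.ne' hGy.ne']
    rw [hGdef]
    simp only [hrdef]
    rw [lx, ly, lz, la, lP]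
    field_simp
    ring
  -- limits of the pieces
  have hlogq : Tendsto (fun q : ℝ => Real.log q) l (nhds (Real.log c)) := htq.log hc0.ne'
  have ha : Tendsto (fun q : ℝ => c * (q - 1) / q) l (nhds (c - 1)) := by
    have h : Tendsto (fun q : ℝ => c * (q - 1) / q) l (nhds (c * (c - 1) / c)) :=
      Tendsto.div (tendsto_const_nhds.mul (htq.sub tendsto_const_nhds)) htq hc0.ne'
    have h2 : c * (c - 1) / c = c - 1 := mul_div_cancel_left₀ _ hc0.ne'
    rw [h2] at h; exact h
  -- T1
  have T1 : Tendsto (fun q : ℝ => (1 - c / q) * Real.log (sphereArea N)) l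
      (nhds (0 * Real.log (sphereArea N))) := he0.mul_const _
  -- T3
  have T3 : Tendsto (fun q : ℝ => (1 - c / q) * (Real.log q - Real.log (q - c))) l (nhds 0) := by
    have h := (he0.mul hlogq).sub (hinvq.mul hulogu)
    have h0 : (0:ℝ) * Real.log c - 1 / c * 0 = 0 := by ring
    rw [h0] at h
    refine h.congr' ?_
    refine hq0ev.mono fun q hq => ?_
    have hq0 : (0:ℝ) < q := by linarith
    field_simp
  -- T2 : the Stirling remainder term
  have T2 : Tendsto (fun q : ℝ =>
      (1 - c / q) * (r (q / (q - c)) + r (c * (q - 1) / (q - c)) - r (c * q / (q - c)))) l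
      (nhds 0) := by
    apply squeeze_zero_norm' (a := fun q : ℝ =>
      (1 - c / q) * (6 * (Real.log (2 * c) + Real.log q) + 3)
        - 6 * (1 / q * ((q - c) * Real.log (q - c))))
    · have hmem : Set.Ioo c (c + 1/2) ∈ l :=
        Ioo_mem_nhdsGT_of_mem ⟨le_refl c, by linarith⟩
      filter_upwards [hmem] with q hq
      obtain ⟨hq1, hq2⟩ := hq
      have hq0 : (0:ℝ) < q := by linarith
      have hu0 : (0:ℝ) < q - c := by linarith
      have hu2 : q - c < 1/2 := by linarith
      have hx3 : (3:ℝ) ≤ q / (q - c) := by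
        rw [le_div_iff₀ hu0]; nlinarith
      have hy3 : (3:ℝ) ≤ c * (q - 1) / (q - c) := by
        rw [le_div_iff₀ hu0]; nlinarith
      have hz3 : (3:ℝ) ≤ c * q / (q - c) := by
        rw [le_div_iff₀ hu0]; nlinarith
      have hxz : q / (q - c) ≤ c * q / (q - c) :=
        (div_le_div_iff_of_pos_right hu0).mpr (by nlinarith)
      have hyz : c * (q - 1) / (q - c) ≤ c * q / (q - c) :=
        (div_le_div_iff_of_pos_right hu0).mpr (by nlinarith)
      have hx0 : (0:ℝ) < q / (q - c) := by linarith [hx3]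
      have hy0 : (0:ℝ) < c * (q - 1) / (q - c) := by linarith [hy3]
      have hz0 : (0:ℝ) < c * q / (q - c) := by linarith [hz3]
      have bx := log_Gamma_bound hx3
      have by' := log_Gamma_bound hy3
      have bz := log_Gamma_bound hz3
      have mlx : Real.log (2 * (q / (q - c))) ≤ Real.log (2 * (c * q / (q - c))) :=
        Real.log_le_log (by linarith) (by linarith)
      have mly : Real.log (2 * (c * (q - 1) / (q - c))) ≤ Real.log (2 * (c * q / (q - c))) :=
        Real.log_le_log (by linarith) (by linarith)
      have hzlog : Real.log (2 * (c * q / (q - c)))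
          = Real.log (2 * c) + Real.log q - Real.log (q - c) := by
        rw [show 2 * (c * q / (q - c)) = (2 * c) * q / (q - c) by ring,
          Real.log_div (by positivity) hu0.ne', Real.log_mul (by positivity) hq0.ne']
      have he : (0:ℝ) ≤ 1 - c / q := by
        have : c / q < 1 := (div_lt_one hq0).mpr hq1
        linarith
      have habs : |r (q / (q - c)) + r (c * (q - 1) / (q - c)) - r (c * q / (q - c))|
          ≤ 6 * Real.log (2 * (c * q / (q - c))) + 3 := by
        have h1 : |r (q / (q - c)) + r (c * (q - 1) / (q - c)) - r (c * q / (q - c))|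
            ≤ |r (q / (q - c))| + |r (c * (q - 1) / (q - c))| + |r (c * q / (q - c))| :=
          (abs_sub _ _).trans (by gcongr; exact abs_add_le _ _)
        simp only [hrdef] at h1 ⊢
        have hlz : (0:ℝ) ≤ Real.log (2 * (c * q / (q - c))) := by
          apply Real.log_nonneg; nlinarith
        linarith [bx, by', bz, h1, mlx, mly]
      rw [Real.norm_eq_abs, abs_mul, abs_of_nonneg he]
      calc (1 - c / q) * |r (q / (q - c)) + r (c * (q - 1) / (q - c)) - r (c * q / (q - c))|
          ≤ (1 - c / q) * (6 * Real.log (2 * (c * q / (q - c))) + 3) :=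
            mul_le_mul_of_nonneg_left habs he
        _ = (1 - c / q) * (6 * (Real.log (2 * c) + Real.log q) + 3)
              - 6 * (1 / q * ((q - c) * Real.log (q - c))) := by
            rw [hzlog]; field_simp; ring
    · have hin : Tendsto (fun q : ℝ => 6 * (Real.log (2 * c) + Real.log q) + 3) l
          (nhds (6 * (Real.log (2 * c) + Real.log c) + 3)) :=
        ((tendsto_const_nhds.add hlogq).const_mul 6).add_const 3
      have h := (he0.mul hin).sub ((hinvq.mul hulogu).const_mul 6)
      have h0 : (0:ℝ) * (6 * (Real.log (2 * c) + Real.log c) + 3) - 6 * (1 / c * 0) = 0 := by ring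
      rw [h0] at h; exact h
  -- T4
  have halog : Tendsto (fun q : ℝ => Real.log (c * (q - 1) / q)) l (nhds (Real.log (c - 1))) :=
    ha.log hc1.ne'
  have T4 : Tendsto (fun q : ℝ => (c * (q - 1) / q) * Real.log (c * (q - 1) / q)
      - c * Real.log c + (c - 1 - c * (q - 1) / q)) l
      (nhds ((c - 1) * Real.log (c - 1) - c * Real.log c + (c - 1 - (c - 1)))) :=
    ((ha.mul halog).sub_const _).add (tendsto_const_nhds.sub ha)
  -- T5
  have hinner : Tendsto (fun q : ℝ => q * (c - 1) / c) l (nhds (c - 1)) := by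
    have h : Tendsto (fun q : ℝ => q * (c - 1) / c) l (nhds (c * (c - 1) / c)) :=
      (htq.mul_const (c - 1)).div_const c
    have h2 : c * (c - 1) / c = c - 1 := mul_div_cancel_left₀ _ hc0.ne'
    rw [h2] at h; exact h
  have T5 : Tendsto (fun q : ℝ => (c / q) * Real.log (q * (c - 1) / c)) l
      (nhds ((c / c) * Real.log (c - 1))) :=
    (tendsto_const_nhds.div htq hc0.ne').mul (hinner.log hc1.ne')
  -- assemble
  have hmain : Tendsto G l (nhds (0 * Real.log (sphereArea N) + 0 + 0
      + ((c - 1) * Real.log (c - 1) - c * Real.log c + (c - 1 - (c - 1)))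
      + (c / c) * Real.log (c - 1))) := by
    rw [hGdef]
    exact (((T1.add T2).add T3).add T4).add T5
  have hval : 0 * Real.log (sphereArea N) + 0 + 0
      + ((c - 1) * Real.log (c - 1) - c * Real.log c + (c - 1 - (c - 1)))
      + (c / c) * Real.log (c - 1) = c * (Real.log (c - 1) - Real.log c) := by
    field_simp; ring
  rw [hval] at hmain
  -- transfer to blissC
  have hpos : ∀ᶠ q in l, 0 < blissC N q := by
    refine hq0ev.mono fun q hq => ?_
    have hq0 : (0:ℝ) < q := by linarith
    have hu0 : (0:ℝ) < q - c := by linarith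
    have hq1 : (0:ℝ) < q - 1 := by linarith
    have hGx := Real.Gamma_pos_of_pos (show (0:ℝ) < q / (q - c) from div_pos hq0 hu0)
    have hGy := Real.Gamma_pos_of_pos (show (0:ℝ) < c * (q - 1) / (q - c) from
      div_pos (by positivity) hu0)
    have hGz := Real.Gamma_pos_of_pos (show (0:ℝ) < c * q / (q - c) from
      div_pos (by positivity) hu0)
    rw [blissC]
    have hR : (0:ℝ) < Real.Gamma (q / (q - c)) * Real.Gamma (c * (q - 1) / (q - c)) /
        Real.Gamma (c * q / (q - c)) := div_pos (mul_pos hGx hGy) hGz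
    have hP : (0:ℝ) < q * (c - 1) / c := by positivity
    positivity
  have hlog : Tendsto (fun q : ℝ => Real.log (blissC N q)) l
      (nhds (c * (Real.log (c - 1) - Real.log c))) :=
    hmain.congr' (heq.mono fun q h => h.symm)
  have hexp : Tendsto (fun q : ℝ => Real.exp (Real.log (blissC N q))) l
      (nhds (Real.exp (c * (Real.log (c - 1) - Real.log c)))) :=
    (Real.continuous_exp.tendsto _).comp hlog
  have hfin : Tendsto (fun q : ℝ => blissC N q) l
      (nhds (Real.exp (c * (Real.log (c - 1) - Real.log c)))) :=
    hexp.congr' (hpos.mono fun q h => Real.exp_log h)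
  have hgoal : Real.exp (c * (Real.log (c - 1) - Real.log c)) = ((c - 1) / c) ^ N := by
    rw [← Real.log_div hc1.ne' hc0.ne', hcdef, Real.exp_nat_mul,
      Real.exp_log (div_pos (by rw [← hcdef]; exact hc1) (by rw [← hcdef]; exact hc0))]
  rw [← hgoal]
  exact hfin
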